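/- arXiv:1411.2038 — 4 statements merged into one kernel-verified Lean document; each statement's English description precedes it below -/
import Mathlib

section
/- For every positive integer k, there do not exist a positive integer d and positive semidefinite Hermitian d×d complex matrices A_1,…,A_10 such that (f_10(x))^k = det(x_1 A_1 + ⋯ + x_10 A_10) as polynomials in x_1,…,x_10. That is, no power of f_10 has a definite determinantal representation. -/
set_option maxRecDepth 40000
set_option maxHeartbeats 1000000

open MvPolynomial
open scoped ComplexOrder

/-- The collection 𝓑 of bases of the 10-element Vámos matroid `V₁₀`. -/
def vamosBases10 : Finset (Finset ℕ) :=
  ((Finset.Icc 1 10).powersetCard 4) \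
    {{1, 2, 3, 4}, {1, 2, 5, 6}, {1, 2, 7, 8}, {1, 2, 9, 10},
      {3, 4, 5, 6}, {5, 6, 7, 8}, {7, 8, 9, 10}}

/-- The basis generating polynomial `f₁₀ = Σ_{B ∈ 𝓑} Π_{i ∈ B} xᵢ ∈ ℝ[x₁,…,x₁₀]`. -/
noncomputable def f10 : MvPolynomial ℕ ℝ :=
  ∑ B ∈ vamosBases10, ∏ i ∈ B, X i

namespace VamosAux

open Polynomial Matrix

variable {n : Type*} [Fintype n] [DecidableEq n]

/-- `det (1 + X • N)` over `ℂ[X]` as a product over eigenvalues of a PSD matrix. -/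
lemma det_one_add_X_smul_psd {N : Matrix n n ℂ} (hN : N.PosSemidef) :
    (Matrix.det (1 + (Polynomial.X : Polynomial ℂ) • N.map Polynomial.C)) =
      ∏ i, (1 + Polynomial.C ((hN.1.eigenvalues i : ℂ)) * Polynomial.X) := by
  classical
  obtain ⟨hH, -⟩ := hN
  set u : Matrix n n ℂ := (hH.eigenvectorUnitary : Matrix n n ℂ) with hu
  have huu : u * star u = 1 := Matrix.mem_unitaryGroup_iff.mp hH.eigenvectorUnitary.2
  have hspec : N = u * Matrix.diagonal (RCLike.ofReal ∘ hH.eigenvalues) * star u :=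
    hH.spectral_theorem
  set D : Matrix n n ℂ := Matrix.diagonal (RCLike.ofReal ∘ hH.eigenvalues) with hD
  have key : (1 + (Polynomial.X : Polynomial ℂ) • N.map Polynomial.C) =
      (u.map Polynomial.C) * ((1 : Matrix n n (Polynomial ℂ))
        + (Polynomial.X : Polynomial ℂ) • D.map Polynomial.C) * ((star u).map Polynomial.C) := by
    rw [Matrix.mul_add, Matrix.add_mul]
    congr 1
    · rw [mul_one, ← Matrix.map_mul, huu, Matrix.map_one _ (map_zero _) (map_one _)]
    · rw [Matrix.mul_smul, Matrix.smul_mul, ← Matrix.map_mul, ← Matrix.map_mul, hspec]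
  rw [key, Matrix.det_mul, Matrix.det_mul, mul_right_comm, ← Matrix.det_mul, ← Matrix.map_mul,
    huu, Matrix.map_one _ (map_zero _) (map_one _), Matrix.det_one, one_mul]
  have : (1 : Matrix n n (Polynomial ℂ)) + (Polynomial.X : Polynomial ℂ) • D.map Polynomial.C =
      Matrix.diagonal (fun i => 1 + Polynomial.C ((hH.eigenvalues i : ℂ)) * Polynomial.X) := by
    apply Matrix.ext; intro i j
    by_cases h : i = j
    · subst h
      simp only [Matrix.add_apply, Matrix.smul_apply, Matrix.map_apply, Matrix.one_apply_eq,
        Matrix.diagonal_apply_eq, hD, smul_eq_mul, Function.comp_apply]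
      rw [mul_comm]
      rfl
    · simp only [Matrix.add_apply, Matrix.smul_apply, Matrix.map_apply, Matrix.one_apply_ne h,
        Matrix.diagonal_apply_ne _ h, hD, smul_eq_mul, map_zero, mul_zero, add_zero]
  rw [this, Matrix.det_diagonal]

lemma fac_ne_zero (a : ℂ) : (1 + Polynomial.C a * Polynomial.X) ≠ 0 := fun h => by
  simpa using congrArg (Polynomial.eval 0) h

lemma fac_natDegree (a : ℂ) :
    (1 + Polynomial.C a * Polynomial.X).natDegree = if a = 0 then 0 else 1 := by
  split_ifs with h
  · simp [h]
  · rw [add_comm, ← Polynomial.C_1, Polynomial.natDegree_linear h]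

open scoped MatrixOrder in
/-- The degree of `det (T + X • M)` is the rank of `M`, for `T` PSD invertible, `M` PSD. -/
lemma natDegree_det_add_X_smul {T M : Matrix n n ℂ} (hT : T.PosSemidef) (hM : M.PosSemidef)
    (hdet : T.det ≠ 0) :
    (Matrix.det (T.map Polynomial.C + (Polynomial.X : Polynomial ℂ) • M.map Polynomial.C)).natDegree
      = M.rank := by
  classical
  set R := CFC.sqrt T with hRdef
  have hRps : R.PosSemidef := Matrix.nonneg_iff_posSemidef.mp (CFC.sqrt_nonneg T)
  have hRR : R * R = T := CFC.sqrt_mul_sqrt_self T (Matrix.nonneg_iff_posSemidef.mpr hT)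
  have hRd : R.det ≠ 0 := fun h => hdet (by rw [← hRR, Matrix.det_mul, h, mul_zero])
  have hRu : IsUnit R.det := Ne.isUnit hRd
  have hRinv : R * R⁻¹ = 1 := Matrix.mul_nonsing_inv R hRu
  have hinvR : R⁻¹ * R = 1 := Matrix.nonsing_inv_mul R hRu
  have hRinvH : R⁻¹.IsHermitian := hRps.1.inv
  set N := R⁻¹ * M * R⁻¹ with hN
  have hNps : N.PosSemidef := by
    have := hM.mul_mul_conjTranspose_same R⁻¹
    rwa [hRinvH.eq] at this
  have hRNR : R * N * R = M := by
    rw [hN]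
    calc R * (R⁻¹ * M * R⁻¹) * R = (R * R⁻¹) * M * (R⁻¹ * R) := by
          simp only [mul_assoc]
      _ = M := by rw [hRinv, hinvR, one_mul, mul_one]
  have key : T.map Polynomial.C + (Polynomial.X : Polynomial ℂ) • M.map Polynomial.C
      = R.map Polynomial.C * ((1 : Matrix n n (Polynomial ℂ))
          + (Polynomial.X : Polynomial ℂ) • N.map Polynomial.C) * (R.map Polynomial.C) := by
    rw [Matrix.mul_add, Matrix.add_mul, mul_one, ← Matrix.map_mul, hRR]
    congr 1
    rw [Matrix.mul_smul, Matrix.smul_mul, ← Matrix.map_mul, ← Matrix.map_mul, hRNR]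
  rw [key, Matrix.det_mul, Matrix.det_mul, mul_right_comm, ← Matrix.det_mul, ← Matrix.map_mul, hRR,
    det_one_add_X_smul_psd hNps]
  have hdetC : (T.map Polynomial.C).det = Polynomial.C T.det := by
    rw [RingHom.map_det]; rfl
  rw [hdetC]
  have hCd : (Polynomial.C T.det) ≠ 0 := by simpa using hdet
  rw [Polynomial.natDegree_mul hCd (Finset.prod_ne_zero_iff.mpr (fun i _ => fac_ne_zero _)),
    Polynomial.natDegree_C, zero_add,
    Polynomial.natDegree_prod _ _ (fun i _ => fac_ne_zero _)]
  have hrk : N.rank = M.rank := by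
    have hRiu : IsUnit (R⁻¹).det := (Matrix.isUnit_nonsing_inv_det R hRu)
    rw [hN, Matrix.rank_mul_eq_left_of_isUnit_det _ _ hRiu,
      Matrix.rank_mul_eq_right_of_isUnit_det _ _ hRiu]
  rw [← hrk, hNps.1.rank_eq_card_non_zero_eigs]
  simp only [fac_natDegree, Complex.ofReal_eq_zero]
  rw [Fintype.card_subtype]
  rw [Finset.sum_ite, Finset.sum_const, Finset.sum_const, smul_eq_mul, mul_zero, smul_eq_mul,
    mul_one, zero_add]

/-- For a Hermitian matrix, the range of the associated Euclidean linear map is the orthogonal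
complement of its kernel. -/
lemma range_toEuclideanLin_eq_orth {B : Matrix n n ℂ} (hB : B.IsHermitian) :
    LinearMap.range (Matrix.toEuclideanLin B)
      = (LinearMap.ker (Matrix.toEuclideanLin B))ᗮ := by
  have hsym : (Matrix.toEuclideanLin B).IsSymmetric :=
    Matrix.isHermitian_iff_isSymmetric.mp hB
  have hle : LinearMap.range (Matrix.toEuclideanLin B)
      ≤ (LinearMap.ker (Matrix.toEuclideanLin B))ᗮ := by
    rintro - ⟨x, rfl⟩
    rw [Submodule.mem_orthogonal]
    intro u hu
    rw [LinearMap.mem_ker] at hu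
    rw [← hsym u x, hu, inner_zero_left]
  apply Submodule.eq_of_le_of_finrank_le hle
  have h1 := LinearMap.finrank_range_add_finrank_ker (Matrix.toEuclideanLin B)
  have h2 := Submodule.finrank_add_finrank_orthogonal
    (K := LinearMap.ker (Matrix.toEuclideanLin B))
  omega

lemma ker_toEuclideanLin_add {P Q : Matrix n n ℂ} (hP : P.PosSemidef) (hQ : Q.PosSemidef) :
    LinearMap.ker (Matrix.toEuclideanLin (P + Q))
      = LinearMap.ker (Matrix.toEuclideanLin P) ⊓ LinearMap.ker (Matrix.toEuclideanLin Q) := by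
  apply le_antisymm
  · intro x hx
    rw [LinearMap.mem_ker, Matrix.toEuclideanLin_apply] at hx
    set v : n → ℂ := (WithLp.equiv 2 (n → ℂ)) x with hv
    have hv0 : (P + Q) *ᵥ v = 0 := by
      have := congrArg (WithLp.equiv 2 (n → ℂ)) hx
      simpa [hv] using this
    have hsum : star v ⬝ᵥ P *ᵥ v + star v ⬝ᵥ Q *ᵥ v = 0 := by
      rw [← dotProduct_add, ← Matrix.add_mulVec, hv0, dotProduct_zero]
    have hP0 : star v ⬝ᵥ P *ᵥ v = 0 := by
      have h1 := hP.dotProduct_mulVec_nonneg v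
      have h2 := hQ.dotProduct_mulVec_nonneg v
      have : star v ⬝ᵥ P *ᵥ v ≤ 0 := by
        rw [← hsum]; exact le_add_of_nonneg_right h2
      exact le_antisymm this h1
    have hQ0 : star v ⬝ᵥ Q *ᵥ v = 0 := by
      rw [← hsum, hP0, zero_add]
    have hPv : P *ᵥ v = 0 := (hP.dotProduct_mulVec_zero_iff v).mp hP0
    have hQv : Q *ᵥ v = 0 := (hQ.dotProduct_mulVec_zero_iff v).mp hQ0
    constructor
    · show x ∈ LinearMap.ker (Matrix.toEuclideanLin P)
      rw [LinearMap.mem_ker, Matrix.toEuclideanLin_apply, show x.ofLp = v from rfl, hPv]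
      simp
    · show x ∈ LinearMap.ker (Matrix.toEuclideanLin Q)
      rw [LinearMap.mem_ker, Matrix.toEuclideanLin_apply, show x.ofLp = v from rfl, hQv]
      simp
  · intro x hx
    obtain ⟨h1, h2⟩ := hx
    rw [SetLike.mem_coe, LinearMap.mem_ker, Matrix.toEuclideanLin_apply] at h1 h2
    rw [LinearMap.mem_ker, Matrix.toEuclideanLin_apply]
    have e1 : P *ᵥ (WithLp.equiv 2 (n → ℂ)) x = 0 := by
      have := congrArg (WithLp.equiv 2 (n → ℂ)) h1
      simpa using this
    have e2 : Q *ᵥ (WithLp.equiv 2 (n → ℂ)) x = 0 := by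
      have := congrArg (WithLp.equiv 2 (n → ℂ)) h2
      simpa using this
    rw [Matrix.add_mulVec, show x.ofLp = (WithLp.equiv 2 (n → ℂ)) x from rfl, e1, e2, add_zero]
    simp

/-- Ranges of PSD matrices add: `ran(P + Q) = ran P + ran Q`. -/
lemma range_toEuclideanLin_add {P Q : Matrix n n ℂ} (hP : P.PosSemidef) (hQ : Q.PosSemidef) :
    LinearMap.range (Matrix.toEuclideanLin (P + Q))
      = LinearMap.range (Matrix.toEuclideanLin P) ⊔ LinearMap.range (Matrix.toEuclideanLin Q) := by
  rw [range_toEuclideanLin_eq_orth (hP.add hQ).1, ker_toEuclideanLin_add hP hQ,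
    range_toEuclideanLin_eq_orth hP.1, range_toEuclideanLin_eq_orth hQ.1]
  conv_lhs => rw [← Submodule.orthogonal_orthogonal (LinearMap.ker (Matrix.toEuclideanLin P)),
    ← Submodule.orthogonal_orthogonal (LinearMap.ker (Matrix.toEuclideanLin Q))]
  rw [Submodule.inf_orthogonal, Submodule.orthogonal_orthogonal]

lemma finrank_range_toEuclideanLin (M : Matrix n n ℂ) :
    Module.finrank ℂ (LinearMap.range (Matrix.toEuclideanLin M)) = M.rank := by
  rw [Matrix.rank_eq_finrank_range_toLin M (PiLp.basisFun 2 ℂ n) (PiLp.basisFun 2 ℂ n)]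
  rfl

/-- Ingleton's inequality for subspaces of a finite dimensional vector space. -/
lemma ingleton {V : Type*} [AddCommGroup V] [Module ℂ V] [FiniteDimensional ℂ V]
    (A B C D : Submodule ℂ V) :
    Module.finrank ℂ ↥(A ⊔ B ⊔ C) + Module.finrank ℂ ↥(A ⊔ B ⊔ D) + Module.finrank ℂ ↥(C ⊔ D)
      + Module.finrank ℂ ↥A + Module.finrank ℂ ↥B
    ≤ Module.finrank ℂ ↥(A ⊔ C) + Module.finrank ℂ ↥(B ⊔ C) + Module.finrank ℂ ↥(A ⊔ D)
      + Module.finrank ℂ ↥(B ⊔ D) + Module.finrank ℂ ↥(A ⊔ B) := by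
  have m1 := Submodule.finrank_sup_add_finrank_inf_eq (A ⊔ C) (B ⊔ C)
  have m2 := Submodule.finrank_sup_add_finrank_inf_eq (A ⊔ D) (B ⊔ D)
  have m3 := Submodule.finrank_sup_add_finrank_inf_eq ((A ⊓ B) ⊔ C) ((A ⊓ B) ⊔ D)
  have m4 := Submodule.finrank_sup_add_finrank_inf_eq A B
  have e1 : A ⊔ C ⊔ (B ⊔ C) = A ⊔ B ⊔ C := by
    rw [sup_sup_sup_comm, sup_idem]
  have e2 : A ⊔ D ⊔ (B ⊔ D) = A ⊔ B ⊔ D := by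
    rw [sup_sup_sup_comm, sup_idem]
  have i1 : Module.finrank ℂ ↥((A ⊓ B) ⊔ C) ≤ Module.finrank ℂ ↥((A ⊔ C) ⊓ (B ⊔ C)) :=
    Submodule.finrank_mono
      (le_inf (sup_le_sup_right inf_le_left C) (sup_le_sup_right inf_le_right C))
  have i2 : Module.finrank ℂ ↥((A ⊓ B) ⊔ D) ≤ Module.finrank ℂ ↥((A ⊔ D) ⊓ (B ⊔ D)) :=
    Submodule.finrank_mono
      (le_inf (sup_le_sup_right inf_le_left D) (sup_le_sup_right inf_le_right D))
  have i3 : Module.finrank ℂ ↥(C ⊔ D) ≤ Module.finrank ℂ ↥((A ⊓ B) ⊔ C ⊔ ((A ⊓ B) ⊔ D)) :=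
    Submodule.finrank_mono (sup_le
      (le_trans le_sup_right le_sup_left) (le_trans le_sup_right le_sup_right))
  have i4 : Module.finrank ℂ ↥(A ⊓ B) ≤ Module.finrank ℂ ↥(((A ⊓ B) ⊔ C) ⊓ ((A ⊓ B) ⊔ D)) :=
    Submodule.finrank_mono (le_inf le_sup_left le_sup_left)
  rw [e1] at m1
  rw [e2] at m2
  omega

/-- The restriction of `f₁₀` along `xᵢ ↦ 1 + t·[i ∈ S]`. -/
noncomputable def qpoly (S : Finset ℕ) : Polynomial ℂ :=
  ∑ B ∈ vamosBases10, (1 + Polynomial.X : Polynomial ℂ) ^ (B ∩ S).card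

lemma subst_identity {d k : ℕ} (A : ℕ → Matrix (Fin d) (Fin d) ℂ)
    (hrep : (MvPolynomial.map (algebraMap ℝ ℂ) f10) ^ k =
      (∑ i ∈ Finset.Icc 1 10,
        (MvPolynomial.X i : MvPolynomial ℕ ℂ) • (A i).map MvPolynomial.C).det)
    (S : Finset ℕ) (hS : S ⊆ Finset.Icc 1 10) :
    (qpoly S) ^ k
      = (((∑ i ∈ Finset.Icc 1 10, A i).map Polynomial.C)
          + (Polynomial.X : Polynomial ℂ) • ((∑ i ∈ S, A i).map Polynomial.C)).det := by
  classical
  set σ : ℕ → Polynomial ℂ := fun i => if i ∈ S then 1 + Polynomial.X else 1 with hσ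
  have happ := congrArg (MvPolynomial.aeval σ) hrep
  rw [map_pow] at happ
  have hL : (MvPolynomial.aeval σ) (MvPolynomial.map (algebraMap ℝ ℂ) f10) = qpoly S := by
    rw [f10, map_sum, map_sum, qpoly]
    apply Finset.sum_congr rfl
    intro B hB
    rw [map_prod, map_prod]
    have : ∀ i ∈ B, (MvPolynomial.aeval σ) (MvPolynomial.map (algebraMap ℝ ℂ) (X i)) = σ i := by
      intro i _
      rw [MvPolynomial.map_X, MvPolynomial.aeval_X]
    rw [Finset.prod_congr rfl this, hσ]
    rw [Finset.prod_ite (f := fun _ => (1 + Polynomial.X : Polynomial ℂ)) (g := fun _ => 1),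
      Finset.prod_const, Finset.prod_const, one_pow, mul_one, Finset.filter_mem_eq_inter]
  have hR : ((MvPolynomial.aeval σ).mapMatrix
        (∑ i ∈ Finset.Icc 1 10, (MvPolynomial.X i : MvPolynomial ℕ ℂ) • (A i).map MvPolynomial.C))
      = ((∑ i ∈ Finset.Icc 1 10, A i).map Polynomial.C)
          + (Polynomial.X : Polynomial ℂ) • ((∑ i ∈ S, A i).map Polynomial.C) := by
    apply Matrix.ext; intro j l
    simp only [AlgHom.mapMatrix_apply, Matrix.map_apply, Matrix.sum_apply, Matrix.add_apply,
      Matrix.smul_apply, smul_eq_mul, map_sum, _root_.map_mul, MvPolynomial.aeval_X,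
      MvPolynomial.aeval_C, Polynomial.algebraMap_eq]
    have step : ∀ i ∈ Finset.Icc 1 10,
        σ i * Polynomial.C (A i j l)
          = Polynomial.C (A i j l)
            + (if i ∈ S then Polynomial.X * Polynomial.C (A i j l) else 0) := by
      intro i _
      rw [hσ]
      by_cases h : i ∈ S
      · simp [h, add_mul]
      · simp [h]
    rw [Finset.sum_congr rfl step, Finset.sum_add_distrib, Finset.sum_ite_mem,
      Finset.inter_eq_right.mpr hS, Finset.mul_sum]
  rw [hL, AlgHom.map_det, hR] at happ
  exact happ

lemma psd_sum {d : ℕ} (A : ℕ → Matrix (Fin d) (Fin d) ℂ) (S : Finset ℕ)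
    (h : ∀ i ∈ S, (A i).PosSemidef) : (∑ i ∈ S, A i).PosSemidef :=
  Finset.sum_induction _ _ (fun _ _ ha hb => ha.add hb) Matrix.PosSemidef.zero h

lemma detT_ne_zero {d k : ℕ} (A : ℕ → Matrix (Fin d) (Fin d) ℂ)
    (hrep : (MvPolynomial.map (algebraMap ℝ ℂ) f10) ^ k =
      (∑ i ∈ Finset.Icc 1 10,
        (MvPolynomial.X i : MvPolynomial ℕ ℂ) • (A i).map MvPolynomial.C).det) :
    (∑ i ∈ Finset.Icc 1 10, A i).det ≠ 0 := by
  have h := subst_identity A hrep ∅ (Finset.empty_subset _)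
  rw [qpoly] at h
  simp only [Finset.inter_empty, Finset.card_empty, pow_zero, Finset.sum_const, nsmul_eq_mul,
    mul_one, Finset.sum_empty] at h
  rw [show ((0 : Matrix (Fin d) (Fin d) ℂ).map Polynomial.C)
      = (0 : Matrix (Fin d) (Fin d) (Polynomial ℂ)) from Matrix.map_zero _ (map_zero _),
    smul_zero, add_zero] at h
  have hdetC : ((∑ i ∈ Finset.Icc 1 10, A i).map Polynomial.C).det
      = Polynomial.C (∑ i ∈ Finset.Icc 1 10, A i).det := by
    rw [RingHom.map_det]; rfl
  rw [hdetC] at h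
  have hcast : ((vamosBases10.card : Polynomial ℂ)) ^ k
      = Polynomial.C (((vamosBases10.card : ℂ)) ^ k) := by
    rw [map_pow, Polynomial.C_eq_natCast]
  rw [hcast] at h
  have := Polynomial.C_injective h.symm
  rw [this]
  apply pow_ne_zero
  rw [Nat.cast_ne_zero]
  decide

lemma qpoly_natDegree (S : Finset ℕ) (r : ℕ)
    (hle : ∀ B ∈ vamosBases10, (B ∩ S).card ≤ r)
    (B₀ : Finset ℕ) (hB₀ : B₀ ∈ vamosBases10) (hB₀c : (B₀ ∩ S).card = r) :
    (qpoly S).natDegree = r ∧ qpoly S ≠ 0 := by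
  have hcoeff : (qpoly S).coeff r ≠ 0 := by
    rw [qpoly, Polynomial.finset_sum_coeff]
    have : ∀ B ∈ vamosBases10,
        ((1 + Polynomial.X : Polynomial ℂ) ^ (B ∩ S).card).coeff r
          = (((B ∩ S).card.choose r : ℕ) : ℂ) := fun B _ => Polynomial.coeff_one_add_X_pow ℂ _ r
    rw [Finset.sum_congr rfl this, ← Nat.cast_sum, Nat.cast_ne_zero]
    have hpos : 0 < ∑ B ∈ vamosBases10, (B ∩ S).card.choose r :=
      Finset.sum_pos' (fun _ _ => Nat.zero_le _)
        ⟨B₀, hB₀, by rw [hB₀c, Nat.choose_self]; norm_num⟩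
    omega
  have hne : qpoly S ≠ 0 := fun h => hcoeff (by rw [h, Polynomial.coeff_zero])
  refine ⟨le_antisymm ?_ (Polynomial.le_natDegree_of_ne_zero hcoeff), hne⟩
  apply Polynomial.natDegree_sum_le_of_forall_le
  intro B hB
  rw [Polynomial.natDegree_pow]
  have h1 : (1 + Polynomial.X : Polynomial ℂ).natDegree = 1 := by
    rw [add_comm, ← Polynomial.C_1, Polynomial.natDegree_X_add_C]
  rw [h1, mul_one]
  exact hle B hB

/-- The central rank formula: `rank (Σ_{i∈S} Aᵢ) = k · r_M(S)`. -/
lemma rank_sum_eq {d k : ℕ} (A : ℕ → Matrix (Fin d) (Fin d) ℂ)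
    (hpsd : ∀ i ∈ Finset.Icc 1 10, (A i).PosSemidef)
    (hrep : (MvPolynomial.map (algebraMap ℝ ℂ) f10) ^ k =
      (∑ i ∈ Finset.Icc 1 10,
        (MvPolynomial.X i : MvPolynomial ℕ ℂ) • (A i).map MvPolynomial.C).det)
    (S : Finset ℕ) (hS : S ⊆ Finset.Icc 1 10) (r : ℕ)
    (hle : ∀ B ∈ vamosBases10, (B ∩ S).card ≤ r)
    (B₀ : Finset ℕ) (hB₀ : B₀ ∈ vamosBases10) (hB₀c : (B₀ ∩ S).card = r) :
    (∑ i ∈ S, A i).rank = k * r := by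
  have hT : (∑ i ∈ Finset.Icc 1 10, A i).PosSemidef := psd_sum A _ hpsd
  have hM : (∑ i ∈ S, A i).PosSemidef := psd_sum A S (fun i hi => hpsd i (hS hi))
  have hdet := detT_ne_zero A hrep
  have hid := subst_identity A hrep S hS
  have hdq := qpoly_natDegree S r hle B₀ hB₀ hB₀c
  have h1 : ((qpoly S) ^ k).natDegree = k * r := by
    rw [Polynomial.natDegree_pow, hdq.1]
  rw [hid, natDegree_det_add_X_smul hT hM hdet] at h1
  exact h1

end VamosAux

/-- No power of `f₁₀` has a definite determinantal representation: for every `k ≥ 1`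
there are no `d ≥ 1` and positive semidefinite Hermitian `d × d` complex matrices
`A₁, …, A₁₀` with `(f₁₀)^k = det (x₁ A₁ + ⋯ + x₁₀ A₁₀)`. -/
theorem f10_pow_no_definite_determinantal_rep :
    ∀ k : ℕ, 0 < k →
      ¬ ∃ (d : ℕ) (A : ℕ → Matrix (Fin d) (Fin d) ℂ),
          0 < d ∧ (∀ i ∈ Finset.Icc 1 10, (A i).PosSemidef) ∧
          (MvPolynomial.map (algebraMap ℝ ℂ) f10) ^ k =
            (∑ i ∈ Finset.Icc 1 10,
              (MvPolynomial.X i : MvPolynomial ℕ ℂ) • (A i).map MvPolynomial.C).det := by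
  intro k hk
  rintro ⟨d, A, hd, hpsd, hrep⟩
  classical
  set W : Finset ℕ → Submodule ℂ (EuclideanSpace ℂ (Fin d)) :=
    fun S => LinearMap.range (Matrix.toEuclideanLin (∑ i ∈ S, A i)) with hWdef
  have hWu : ∀ S T : Finset ℕ, S ⊆ Finset.Icc 1 10 → T ⊆ Finset.Icc 1 10 → Disjoint S T →
      W S ⊔ W T = W (S ∪ T) := by
    intro S T hS hT hdisj
    rw [hWdef]
    simp only
    rw [Finset.sum_union hdisj,
      VamosAux.range_toEuclideanLin_add
        (VamosAux.psd_sum A S (fun i hi => hpsd i (hS hi)))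
        (VamosAux.psd_sum A T (fun i hi => hpsd i (hT hi)))]
  have frk : ∀ S : Finset ℕ, S ⊆ Finset.Icc 1 10 → ∀ r : ℕ,
      (∀ B ∈ vamosBases10, (B ∩ S).card ≤ r) →
      ∀ B₀ : Finset ℕ, B₀ ∈ vamosBases10 → (B₀ ∩ S).card = r →
      Module.finrank ℂ ↥(W S) = k * r := by
    intro S hS r hle B₀ hB₀ hc
    rw [hWdef]
    simp only
    rw [VamosAux.finrank_range_toEuclideanLin,
      VamosAux.rank_sum_eq A hpsd hrep S hS r hle B₀ hB₀ hc]
  -- the four Vámos pair subspaces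
  have hab : W {1,2} ⊔ W {5,6} = W {1,2,5,6} := by
    rw [hWu _ _ (by decide) (by decide) (by decide)]
    all_goals (congr 1 <;> decide)
  have hac : W {1,2} ⊔ W {3,4} = W {1,2,3,4} := by
    rw [hWu _ _ (by decide) (by decide) (by decide)]
    all_goals (congr 1 <;> decide)
  have had : W {1,2} ⊔ W {7,8} = W {1,2,7,8} := by
    rw [hWu _ _ (by decide) (by decide) (by decide)]
    all_goals (congr 1 <;> decide)
  have hbc : W {5,6} ⊔ W {3,4} = W {3,4,5,6} := by
    rw [hWu _ _ (by decide) (by decide) (by decide)]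
    all_goals (congr 1 <;> decide)
  have hbd : W {5,6} ⊔ W {7,8} = W {5,6,7,8} := by
    rw [hWu _ _ (by decide) (by decide) (by decide)]
    all_goals (congr 1 <;> decide)
  have hcd : W {3,4} ⊔ W {7,8} = W {3,4,7,8} := by
    rw [hWu _ _ (by decide) (by decide) (by decide)]
    all_goals (congr 1 <;> decide)
  have habc : W {1,2,5,6} ⊔ W {3,4} = W {1,2,3,4,5,6} := by
    rw [hWu _ _ (by decide) (by decide) (by decide)]
    all_goals (congr 1 <;> decide)
  have habd : W {1,2,5,6} ⊔ W {7,8} = W {1,2,5,6,7,8} := by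
    rw [hWu _ _ (by decide) (by decide) (by decide)]
    all_goals (congr 1 <;> decide)
  -- finrank values
  have f1 : Module.finrank ℂ ↥(W {1,2}) = k * 2 :=
    frk _ (by decide) 2 (by decide) {1,2,3,5} (by decide) (by decide)
  have f2 : Module.finrank ℂ ↥(W {5,6}) = k * 2 :=
    frk _ (by decide) 2 (by decide) {1,3,5,6} (by decide) (by decide)
  have f3 : Module.finrank ℂ ↥(W {1,2,5,6}) = k * 3 :=
    frk _ (by decide) 3 (by decide) {1,2,3,5} (by decide) (by decide)
  have f4 : Module.finrank ℂ ↥(W {1,2,3,4}) = k * 3 :=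
    frk _ (by decide) 3 (by decide) {1,2,3,5} (by decide) (by decide)
  have f5 : Module.finrank ℂ ↥(W {1,2,7,8}) = k * 3 :=
    frk _ (by decide) 3 (by decide) {1,2,3,7} (by decide) (by decide)
  have f6 : Module.finrank ℂ ↥(W {3,4,5,6}) = k * 3 :=
    frk _ (by decide) 3 (by decide) {1,3,4,5} (by decide) (by decide)
  have f7 : Module.finrank ℂ ↥(W {5,6,7,8}) = k * 3 :=
    frk _ (by decide) 3 (by decide) {1,5,6,7} (by decide) (by decide)
  have f8 : Module.finrank ℂ ↥(W {3,4,7,8}) = k * 4 :=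
    frk _ (by decide) 4 (by decide) {3,4,7,8} (by decide) (by decide)
  have f9 : Module.finrank ℂ ↥(W {1,2,3,4,5,6}) = k * 4 :=
    frk _ (by decide) 4 (by decide) {1,2,3,5} (by decide) (by decide)
  have f10' : Module.finrank ℂ ↥(W {1,2,5,6,7,8}) = k * 4 :=
    frk _ (by decide) 4 (by decide) {1,2,5,7} (by decide) (by decide)
  have key := VamosAux.ingleton (W {1,2}) (W {5,6}) (W {3,4}) (W {7,8})
  rw [hab, habc, habd, hcd, hac, hbc, had, hbd, f1, f2, f3, f4, f5, f6, f7, f8, f9, f10'] at key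
  omega
end

section
/- For every integer n ≥ 4, let 𝓗_{2n} be the collection of subsets of {1,…,2n} of the form {1,2,2k−1,2k} or {2k−1,2k,2k+1,2k+2} for 2 ≤ k ≤ n (all indices taken within {1,…,2n}). Then there exists a matroid on the ground set {1,…,2n} whose bases are exactly the 4-element subsets B of {1,…,2n} with B ∉ 𝓗_{2n}. -/
/-- The collection `𝓗₂ₙ` of subsets of `{1,…,2n}` of the form `{1,2,2k−1,2k}` or
`{2k−1,2k,2k+1,2k+2}` for `2 ≤ k ≤ n` (indices taken within `{1,…,2n}`). -/
def H2n (n : ℕ) : Finset (Finset ℕ) :=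
  (Finset.Icc 2 n).biUnion fun k =>
    {{1, 2, 2 * k - 1, 2 * k}, {2 * k - 1, 2 * k, 2 * k + 1, 2 * k + 2}}

/-- The bases of the `2n`-Vámos matroid: all 4-element subsets of `{1,…,2n}` not
belonging to `𝓗₂ₙ`. -/
def vamosBases2n (n : ℕ) : Finset (Finset ℕ) :=
  ((Finset.Icc 1 (2 * n)).powersetCard 4) \ H2n n

lemma H2n_inter_card {n : ℕ} {X Y : Finset ℕ} (hX : X ∈ H2n n) (hY : Y ∈ H2n n)
    (hne : X ≠ Y) : (X ∩ Y).card ≤ 2 := by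
  simp only [H2n, Finset.mem_biUnion, Finset.mem_insert, Finset.mem_singleton,
    Finset.mem_Icc] at hX hY
  obtain ⟨k, ⟨hk2, hkn⟩, hXk⟩ := hX
  obtain ⟨j, ⟨hj2, hjn⟩, hYj⟩ := hY
  have key : ∃ a b : ℕ, X ∩ Y ⊆ {a, b} := by
    rcases hXk with rfl | rfl <;> rcases hYj with rfl | rfl
    · rcases eq_or_ne k j with rfl | hkj
      · exact absurd rfl hne
      · refine ⟨1, 2, fun x hx => ?_⟩
        simp only [Finset.mem_inter, Finset.mem_insert, Finset.mem_singleton] at hx ⊢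
        omega
    · refine ⟨2*k-1, 2*k, fun x hx => ?_⟩
      simp only [Finset.mem_inter, Finset.mem_insert, Finset.mem_singleton] at hx ⊢
      omega
    · refine ⟨2*j-1, 2*j, fun x hx => ?_⟩
      simp only [Finset.mem_inter, Finset.mem_insert, Finset.mem_singleton] at hx ⊢
      omega
    · rcases lt_trichotomy k j with h | rfl | h
      · refine ⟨2*k+1, 2*k+2, fun x hx => ?_⟩
        simp only [Finset.mem_inter, Finset.mem_insert, Finset.mem_singleton] at hx ⊢
        omega
      · exact absurd rfl hne
      · refine ⟨2*j+1, 2*j+2, fun x hx => ?_⟩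
        simp only [Finset.mem_inter, Finset.mem_insert, Finset.mem_singleton] at hx ⊢
        omega
  obtain ⟨a, b, hab⟩ := key
  exact (Finset.card_le_card hab).trans ((Finset.card_insert_le _ _).trans (by simp))

/-- A 3-element set is contained in at most one member of `H2n`. -/
lemma H2n_unique {n : ℕ} {X Y T : Finset ℕ} (hX : X ∈ H2n n) (hY : Y ∈ H2n n)
    (hT : T.card = 3) (hTX : T ⊆ X) (hTY : T ⊆ Y) : X = Y := by
  by_contra hne
  have : T ⊆ X ∩ Y := Finset.subset_inter hTX hTY
  have := (Finset.card_le_card this).trans (H2n_inter_card hX hY hne)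
  omega

lemma card_of_mem_H2n {n : ℕ} {X : Finset ℕ} (hX : X ∈ H2n n) : X.card = 4 := by
  simp only [H2n, Finset.mem_biUnion, Finset.mem_insert, Finset.mem_singleton,
    Finset.mem_Icc] at hX
  obtain ⟨k, ⟨hk2, hkn⟩, rfl | rfl⟩ := hX <;>
  · rw [show (4:ℕ) = 3+1 by rfl]
    rw [Finset.card_insert_of_notMem (by simp only [Finset.mem_insert, Finset.mem_singleton]; omega),
        Finset.card_insert_of_notMem (by simp only [Finset.mem_insert, Finset.mem_singleton]; omega),
        Finset.card_insert_of_notMem (by simp only [Finset.mem_insert, Finset.mem_singleton]; omega), Finset.card_singleton]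

lemma mem_vamosBases2n {n : ℕ} {B : Finset ℕ} :
    B ∈ vamosBases2n n ↔ (B ⊆ Finset.Icc 1 (2 * n) ∧ B.card = 4) ∧ B ∉ H2n n := by
  simp [vamosBases2n, Finset.mem_powersetCard]

lemma vamos_exchange {n : ℕ} {B1 B2 : Finset ℕ} (hB1 : B1 ∈ vamosBases2n n)
    (hB2 : B2 ∈ vamosBases2n n) {a : ℕ} (ha : a ∈ B1 \ B2) :
    ∃ b ∈ B2 \ B1, insert b (B1.erase a) ∈ vamosBases2n n := by
  obtain ⟨⟨hB1sub, hB1card⟩, hB1H⟩ := mem_vamosBases2n.mp hB1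
  obtain ⟨⟨hB2sub, hB2card⟩, hB2H⟩ := mem_vamosBases2n.mp hB2
  rw [Finset.mem_sdiff] at ha
  obtain ⟨ha1, ha2⟩ := ha
  set T := B1.erase a with hT
  have hT3 : T.card = 3 := by rw [hT, Finset.card_erase_of_mem ha1, hB1card]
  have hTsub : T ⊆ B1 := Finset.erase_subset _ _
  have good : ∀ b ∈ B2 \ B1, insert b T ∉ H2n n → insert b T ∈ vamosBases2n n := by
    intro b hb hbH
    rw [Finset.mem_sdiff] at hb
    refine mem_vamosBases2n.mpr ⟨⟨?_, ?_⟩, hbH⟩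
    · exact Finset.insert_subset (hB2sub hb.1) (hTsub.trans hB1sub)
    · rw [Finset.card_insert_of_notMem (fun h => hb.2 (hTsub h)), hT3]
  have hdcard : (B1 \ B2).card = (B2 \ B1).card :=
    Finset.card_sdiff_comm (hB1card.trans hB2card.symm)
  have hpos : 1 ≤ (B2 \ B1).card := by
    rw [← hdcard]
    exact Finset.card_pos.mpr ⟨a, Finset.mem_sdiff.mpr ⟨ha1, ha2⟩⟩
  rcases eq_or_lt_of_le hpos with h1 | h2
  · -- |B2 \ B1| = 1 : the unique candidate gives B2 itself
    obtain ⟨b, hb⟩ := Finset.card_eq_one.mp h1.symm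
    obtain ⟨c, hc⟩ := Finset.card_eq_one.mp (hdcard.symm ▸ h1.symm : (B1 \ B2).card = 1)
    have hac : a = c := by
      have : a ∈ ({c} : Finset ℕ) := hc ▸ Finset.mem_sdiff.mpr ⟨ha1, ha2⟩
      simpa using this
    have hbmem : b ∈ B2 \ B1 := hb ▸ Finset.mem_singleton_self b
    have hTsubB2 : T ⊆ B2 := by
      intro x hx
      rw [hT, Finset.mem_erase] at hx
      by_contra hxB2
      have : x ∈ ({c} : Finset ℕ) := hc ▸ Finset.mem_sdiff.mpr ⟨hx.2, hxB2⟩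
      rw [Finset.mem_singleton] at this
      exact hx.1 (this.trans hac.symm)
    have hbB1 : b ∉ B1 := (Finset.mem_sdiff.mp hbmem).2
    have heq : insert b T = B2 := by
      apply Finset.eq_of_subset_of_card_le
      · exact Finset.insert_subset (Finset.mem_sdiff.mp hbmem).1 hTsubB2
      · rw [Finset.card_insert_of_notMem (fun h => hbB1 (hTsub h)), hT3, hB2card]
    exact ⟨b, hbmem, heq ▸ hB2⟩
  · -- |B2 \ B1| ≥ 2 : at most one candidate is bad
    obtain ⟨b, hb, b', hb', hbb'⟩ := Finset.one_lt_card.mp h2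
    by_cases hbad : insert b T ∈ H2n n
    · refine ⟨b', hb', good b' hb' fun hbad' => ?_⟩
      have heq : insert b T = insert b' T :=
        H2n_unique hbad hbad' hT3 (Finset.subset_insert _ _) (Finset.subset_insert _ _)
      have : b' ∈ insert b T := heq ▸ Finset.mem_insert_self b' T
      rcases Finset.mem_insert.mp this with h | h
      · exact hbb' h.symm
      · exact (Finset.mem_sdiff.mp hb').2 (hTsub h)
    · exact ⟨b, hb, good b hb hbad⟩

/-- For every `n ≥ 4` there is a matroid on the ground set `{1,…,2n}` whose bases are
exactly the 4-element subsets of `{1,…,2n}` not in `𝓗₂ₙ`. -/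
theorem exists_matroid_vamos2n (n : ℕ) (hn : 4 ≤ n) :
    ∃ M : Matroid ℕ, M.E = ↑(Finset.Icc 1 (2 * n)) ∧
      ∀ S : Set ℕ, M.IsBase S ↔ ∃ B ∈ vamosBases2n n, S = ↑B := by
  have hbase0 : ({1, 3, 5, 7} : Finset ℕ) ∈ vamosBases2n n := by
    refine mem_vamosBases2n.mpr ⟨⟨?_, by decide⟩, ?_⟩
    · intro x hx
      simp only [Finset.mem_insert, Finset.mem_singleton] at hx
      rw [Finset.mem_Icc]
      omega
    · intro h
      simp only [H2n, Finset.mem_biUnion, Finset.mem_insert, Finset.mem_singleton,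
        Finset.mem_Icc] at h
      obtain ⟨k, ⟨hk2, hkn⟩, h | h⟩ := h
      · have h2 : (2 : ℕ) ∈ ({1, 2, 2*k-1, 2*k} : Finset ℕ) := by simp
        rw [← h] at h2
        simp only [Finset.mem_insert, Finset.mem_singleton] at h2
        omega
      · have h1 : (1 : ℕ) ∈ ({1, 3, 5, 7} : Finset ℕ) := by simp
        rw [h] at h1
        simp only [Finset.mem_insert, Finset.mem_singleton] at h1
        omega
  refine ⟨Matroid.ofIsBaseOfFinite (Finset.Icc 1 (2*n)).finite_toSet
    (fun S => ∃ B ∈ vamosBases2n n, S = ↑B)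
    ⟨↑({1,3,5,7} : Finset ℕ), {1,3,5,7}, hbase0, rfl⟩ ?_ ?_, rfl, fun S => Iff.rfl⟩
  · rintro X Y ⟨B1, hB1, rfl⟩ ⟨B2, hB2, rfl⟩ a ha
    have ha' : a ∈ B1 \ B2 := by
      rw [Finset.mem_sdiff]
      exact ⟨ha.1, fun h => ha.2 h⟩
    obtain ⟨b, hb, hmem⟩ := vamos_exchange hB1 hB2 ha'
    rw [Finset.mem_sdiff] at hb
    refine ⟨b, ⟨hb.1, fun h => hb.2 h⟩, insert b (B1.erase a), hmem, ?_⟩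
    simp [Finset.coe_insert, Finset.coe_erase]
  · rintro S ⟨B, hB, rfl⟩
    exact Finset.coe_subset.mpr (mem_vamosBases2n.mp hB).1.1
end

section
/- The matroid V_10 is not representable over any field: for every field F, every F-vector space W, and every function v : {1,…,10} → W, it is not the case that for every 4-element subset S of {1,…,10}, the family (v_i)_{i∈S} is linearly independent over F if and only if S ∈ 𝓑, where 𝓑 consists of all 4-element subsets of {1,…,10} except {1,2,3,4}, {1,2,5,6}, {1,2,7,8}, {1,2,9,10}, {3,4,5,6}, {5,6,7,8}, {7,8,9,10}. -/
namespace Vamos10Aux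

open Finset Submodule Module

variable {F : Type*} [Field F] {W : Type*} [AddCommGroup W] [Module F W]

lemma sum_quad {M : Type*} [AddCommMonoid M] (G : ℕ → M) (n1 n2 n3 n4 : ℕ)
    (h1 : n1 ∉ ({n2,n3,n4} : Finset ℕ)) (h2 : n2 ∉ ({n3,n4} : Finset ℕ))
    (h3 : n3 ∉ ({n4} : Finset ℕ)) :
    ∑ n ∈ ({n1,n2,n3,n4} : Finset ℕ), G n = G n1 + G n2 + G n3 + G n4 := by
  rw [show ({n1,n2,n3,n4} : Finset ℕ) = insert n1 (insert n2 (insert n3 {n4})) from rfl,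
    Finset.sum_insert h1, Finset.sum_insert h2, Finset.sum_insert h3, Finset.sum_singleton]
  abel

lemma key (v : ℕ → W) (n1 n2 n3 n4 : ℕ)
    (h1 : n1 ∉ ({n2,n3,n4} : Finset ℕ)) (h2 : n2 ∉ ({n3,n4} : Finset ℕ))
    (h3 : n3 ∉ ({n4} : Finset ℕ)) :
    LinearIndependent F (fun i : ({n1,n2,n3,n4} : Finset ℕ) => v (i : ℕ)) ↔
      ∀ a b c d : F, a • v n1 + b • v n2 + c • v n3 + d • v n4 = 0 →
        a = 0 ∧ b = 0 ∧ c = 0 ∧ d = 0 := by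
  classical
  have hd1 : n1 ≠ n2 ∧ n1 ≠ n3 ∧ n1 ≠ n4 := by simpa using h1
  have hd2 : n2 ≠ n3 ∧ n2 ≠ n4 := by simpa using h2
  have hd3 : n3 ≠ n4 := by simpa using h3
  rw [Fintype.linearIndependent_iff]
  constructor
  · intro H a b c d heq
    set G : ℕ → F := fun n =>
      if n = n1 then a else if n = n2 then b else if n = n3 then c else if n = n4 then d else 0
      with hG
    have hsum : ∑ i : ({n1,n2,n3,n4} : Finset ℕ), G (i : ℕ) • v (i : ℕ) = 0 := by
      rw [Finset.univ_eq_attach, Finset.sum_attach _ (fun n => G n • v n),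
        sum_quad _ n1 n2 n3 n4 h1 h2 h3]
      have e1 : G n1 = a := by simp [hG]
      have e2 : G n2 = b := by simp [hG, hd1.1.symm, hd2]
      have e3 : G n3 = c := by simp [hG, hd1.2.1.symm, hd2.1.symm]
      have e4 : G n4 = d := by simp [hG, hd1.2.2.symm, hd2.2.symm, hd3.symm]
      rw [e1, e2, e3, e4]; exact heq
    have h0 := H (fun i => G (i : ℕ)) hsum
    refine ⟨?_, ?_, ?_, ?_⟩
    · have := h0 ⟨n1, by simp⟩; simpa [hG] using this
    · have := h0 ⟨n2, by simp⟩; simpa [hG, hd1.1.symm, hd2] using this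
    · have := h0 ⟨n3, by simp⟩; simpa [hG, hd1.2.1.symm, hd2.1.symm] using this
    · have := h0 ⟨n4, by simp⟩; simpa [hG, hd1.2.2.symm, hd2.2.symm, hd3.symm] using this
  · intro H g hsum i
    set G : ℕ → F := fun n => if h : n ∈ ({n1,n2,n3,n4} : Finset ℕ) then g ⟨n, h⟩ else 0 with hG
    have hGg : ∀ j : ({n1,n2,n3,n4} : Finset ℕ), G (j : ℕ) = g j := by
      intro j; simp only [hG]; rw [dif_pos j.2]
    have hsum' : G n1 • v n1 + G n2 • v n2 + G n3 • v n3 + G n4 • v n4 = 0 := by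
      rw [← sum_quad (fun n => G n • v n) n1 n2 n3 n4 h1 h2 h3,
        ← Finset.sum_attach _ (fun n => G n • v n), ← Finset.univ_eq_attach]
      rw [← hsum]
      exact Finset.sum_congr rfl (fun j _ => by rw [hGg])
    have hz := H _ _ _ _ hsum'
    rw [← hGg i]
    obtain ⟨n, hn⟩ := i
    simp only [Finset.mem_insert, Finset.mem_singleton] at hn
    rcases hn with h | h | h | h <;> subst h
    exacts [hz.1, hz.2.1, hz.2.2.1, hz.2.2.2]

lemma four_in_three {y1 y2 y3 w1 w2 w3 w4 : W}
    (m1 : ∃ a b c : F, w1 = a•y1 + b•y2 + c•y3)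
    (m2 : ∃ a b c : F, w2 = a•y1 + b•y2 + c•y3)
    (m3 : ∃ a b c : F, w3 = a•y1 + b•y2 + c•y3)
    (m4 : ∃ a b c : F, w4 = a•y1 + b•y2 + c•y3)
    (hLI : ∀ a b c d : F, a•w1 + b•w2 + c•w3 + d•w4 = 0 → a = 0 ∧ b = 0 ∧ c = 0 ∧ d = 0) :
    False := by
  classical
  set N : Submodule F W := span F ({y1, y2, y3} : Set W) with hN
  have hfin : FiniteDimensional F N :=
    FiniteDimensional.span_of_finite F
      ((Set.finite_singleton y3).insert y2 |>.insert y1)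
  have hmem : ∀ i : Fin 4, (![w1, w2, w3, w4] i) ∈ N := by
    have sub : ∀ x ∈ ({y1, y2, y3} : Set W), x ∈ N := fun x hx => subset_span hx
    intro i
    fin_cases i <;>
      [obtain ⟨a, b, c, h⟩ := m1; obtain ⟨a, b, c, h⟩ := m2;
       obtain ⟨a, b, c, h⟩ := m3; obtain ⟨a, b, c, h⟩ := m4] <;>
      · simp only [Matrix.cons_val_zero, Matrix.cons_val_one, Matrix.head_cons,
          Matrix.cons_val_fin_one, Matrix.cons_val_two, Matrix.tail_cons, Matrix.cons_val_three]
        rw [h]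
        exact add_mem (add_mem (smul_mem _ _ (sub _ (by simp))) (smul_mem _ _ (sub _ (by simp))))
          (smul_mem _ _ (sub _ (by simp)))
  set w' : Fin 4 → N := fun i => ⟨![w1, w2, w3, w4] i, hmem i⟩ with hw'
  have hLI4 : LinearIndependent F ![w1, w2, w3, w4] := by
    rw [Fintype.linearIndependent_iff]
    intro g hg i
    have h0 := hLI (g 0) (g 1) (g 2) (g 3) (by simpa [Fin.sum_univ_four] using hg)
    fin_cases i
    exacts [h0.1, h0.2.1, h0.2.2.1, h0.2.2.2]
  have hLIw' : LinearIndependent F w' := by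
    apply LinearIndependent.of_comp N.subtype
    have : N.subtype ∘ w' = ![w1, w2, w3, w4] := rfl
    rw [this]; exact hLI4
  have h4 : (4 : ℕ) ≤ finrank F N := by
    simpa using hLIw'.fintype_card_le_finrank
  have h3 : finrank F N ≤ 3 := by
    have h := finrank_span_le_card (R := F) ({y1, y2, y3} : Set W)
    refine h.trans ?_
    have hsub : ({y1, y2, y3} : Set W).toFinset ⊆ {y1, y2, y3} := by
      intro x hx; simpa using (Set.mem_toFinset.mp hx)
    calc ({y1, y2, y3} : Set W).toFinset.card ≤ ({y1, y2, y3} : Finset W).card :=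
          Finset.card_le_card hsub
      _ ≤ 3 := (Finset.card_insert_le _ _).trans (Nat.succ_le_succ
          ((Finset.card_insert_le _ _).trans (by simp)))
  omega

lemma para_of_det0 {u w x y : W} {p q r s : F}
    (hx : x = p•u + q•w) (hy : y = r•u + s•w) (hdet : p*s - q*r = 0)
    (hxne : x ≠ 0) (hyne : y ≠ 0) :
    ∃ t : F, t ≠ 0 ∧ x = t • y := by
  have k1 : s•x - q•y = (p*s - q*r)•u := by rw [hx, hy]; module
  have k2 : r•x - p•y = (q*r - p*s)•w := by rw [hx, hy]; module
  rw [hdet, zero_smul, sub_eq_zero] at k1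
  have hdet' : q*r - p*s = 0 := by linear_combination -hdet
  rw [hdet', zero_smul, sub_eq_zero] at k2
  have hrs : r ≠ 0 ∨ s ≠ 0 := by
    by_contra hc
    push_neg at hc
    exact hyne (by rw [hy, hc.1, hc.2, zero_smul, zero_smul, add_zero])
  rcases hrs with hr | hs
  · have heq : x = (r⁻¹*p)•y := by rw [← inv_smul_smul₀ hr x, k2, smul_smul]
    exact ⟨r⁻¹*p, fun h0 => hxne (by rw [heq, h0, zero_smul]), heq⟩
  · have heq : x = (s⁻¹*q)•y := by rw [← inv_smul_smul₀ hs x, k1, smul_smul]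
    exact ⟨s⁻¹*q, fun h0 => hxne (by rw [heq, h0, zero_smul]), heq⟩

lemma invpair {u w x y : W} {p q r s : F}
    (hx : x = p•u + q•w) (hy : y = r•u + s•w) (hdet : p*s - q*r ≠ 0) :
    (∃ m n : F, u = m•x + n•y) ∧ (∃ m n : F, w = m•x + n•y) := by
  constructor
  · refine ⟨(p*s - q*r)⁻¹ * s, -((p*s - q*r)⁻¹ * q), ?_⟩
    rw [hx, hy]; match_scalars <;> field_simp <;> ring
  · refine ⟨-((p*s - q*r)⁻¹ * r), (p*s - q*r)⁻¹ * p, ?_⟩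
    rw [hx, hy]; match_scalars <;> field_simp <;> ring

end Vamos10Aux

open Vamos10Aux in
/-- The Vámos matroid `V₁₀` is not representable over any field: there is no field `F`,
`F`-vector space `W` and assignment `v : {1,…,10} → W` such that a 4-element subset
`S ⊆ {1,…,10}` indexes a linearly independent family `(vᵢ)_{i ∈ S}` exactly when
`S ∈ 𝓑`. -/
theorem vamos10_not_representable :
    ∀ (F : Type*) [Field F] (W : Type*) [AddCommGroup W] [Module F W] (v : ℕ → W),
      ¬ (∀ S : Finset ℕ, S ⊆ Finset.Icc 1 10 → S.card = 4 →
          (LinearIndependent F (fun i : S => v (i : ℕ)) ↔ S ∈ vamosBases10)) := by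
  intro F _ W _ _ v H
  -- independence facts from bases
  have L1 := (key v 1 2 5 7 (by decide) (by decide) (by decide)).mp
    ((H {1,2,5,7} (by decide) (by decide)).mpr (by decide))
  have L2 := (key v 1 2 7 9 (by decide) (by decide) (by decide)).mp
    ((H {1,2,7,9} (by decide) (by decide)).mpr (by decide))
  have L3 := (key v 5 6 9 10 (by decide) (by decide) (by decide)).mp
    ((H {5,6,9,10} (by decide) (by decide)).mpr (by decide))
  have L4 := (key v 1 7 8 9 (by decide) (by decide) (by decide)).mp
    ((H {1,7,8,9} (by decide) (by decide)).mpr (by decide))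
  -- pair independence
  have P12 : ∀ a b : F, a•v 1 + b•v 2 = 0 → a = 0 ∧ b = 0 := fun a b h => by
    have := L1 a b 0 0 (by simpa using h); exact ⟨this.1, this.2.1⟩
  have P56 : ∀ a b : F, a•v 5 + b•v 6 = 0 → a = 0 ∧ b = 0 := fun a b h => by
    have := L3 a b 0 0 (by simpa using h); exact ⟨this.1, this.2.1⟩
  have P910 : ∀ a b : F, a•v 9 + b•v 10 = 0 → a = 0 ∧ b = 0 := fun a b h => by
    have := L3 0 0 a b (by simpa using h); exact ⟨this.2.2.1, this.2.2.2⟩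
  have P78 : ∀ a b : F, a•v 7 + b•v 8 = 0 → a = 0 ∧ b = 0 := fun a b h => by
    have := L4 0 a b 0 (by simpa using h); exact ⟨this.2.1, this.2.2.1⟩
  -- dependence facts from non-bases
  have getdep : ∀ n1 n2 n3 n4 : ℕ, n1 ∉ ({n2,n3,n4} : Finset ℕ) → n2 ∉ ({n3,n4} : Finset ℕ) →
      n3 ∉ ({n4} : Finset ℕ) → ({n1,n2,n3,n4} : Finset ℕ) ⊆ Finset.Icc 1 10 →
      ({n1,n2,n3,n4} : Finset ℕ).card = 4 → ({n1,n2,n3,n4} : Finset ℕ) ∉ vamosBases10 →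
      ∃ a b c d : F, a•v n1 + b•v n2 + c•v n3 + d•v n4 = 0 ∧
        ¬(a = 0 ∧ b = 0 ∧ c = 0 ∧ d = 0) := by
    intro n1 n2 n3 n4 h1 h2 h3 hsub hcard hnb
    have hnLI : ¬ LinearIndependent F (fun i : ({n1,n2,n3,n4} : Finset ℕ) => v (i : ℕ)) :=
      fun hLI => hnb ((H _ hsub hcard).mp hLI)
    have := (key v n1 n2 n3 n4 h1 h2 h3).not.mp hnLI
    simp only [not_forall, Classical.not_imp] at this
    obtain ⟨a, b, c, d, h, hne⟩ := this
    exact ⟨a, b, c, d, h, hne⟩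
  obtain ⟨a1, a2, a3, a4, heq1, hne1⟩ :=
    getdep 1 2 5 6 (by decide) (by decide) (by decide) (by decide) (by decide) (by decide)
  obtain ⟨b1, b2, b3, b4, heq2, hne2⟩ :=
    getdep 1 2 9 10 (by decide) (by decide) (by decide) (by decide) (by decide) (by decide)
  obtain ⟨c1, c2, c3, c4, heq3, hne3⟩ :=
    getdep 5 6 7 8 (by decide) (by decide) (by decide) (by decide) (by decide) (by decide)
  obtain ⟨d1, d2, d3, d4, heq4, hne4⟩ :=
    getdep 7 8 9 10 (by decide) (by decide) (by decide) (by decide) (by decide) (by decide)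
  obtain ⟨e1, e2, e3, e4, heq5, hne5⟩ :=
    getdep 1 2 7 8 (by decide) (by decide) (by decide) (by decide) (by decide) (by decide)
  -- intersection vectors
  obtain ⟨x1, hx1def⟩ : ∃ x : W, x = a1•v 1 + a2•v 2 := ⟨_, rfl⟩
  obtain ⟨x2, hx2def⟩ : ∃ x : W, x = b1•v 1 + b2•v 2 := ⟨_, rfl⟩
  obtain ⟨x3, hx3def⟩ : ∃ x : W, x = c1•v 5 + c2•v 6 := ⟨_, rfl⟩
  obtain ⟨x4, hx4def⟩ : ∃ x : W, x = d1•v 7 + d2•v 8 := ⟨_, rfl⟩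
  obtain ⟨x5, hx5def⟩ : ∃ x : W, x = e1•v 1 + e2•v 2 := ⟨_, rfl⟩
  have hx1C : x1 = (-a3)•v 5 + (-a4)•v 6 := by
    rw [hx1def]; linear_combination (norm := module) heq1
  have hx2E : x2 = (-b3)•v 9 + (-b4)•v 10 := by
    rw [hx2def]; linear_combination (norm := module) heq2
  have hx3D : x3 = (-c3)•v 7 + (-c4)•v 8 := by
    rw [hx3def]; linear_combination (norm := module) heq3
  have hx4E : x4 = (-d3)•v 9 + (-d4)•v 10 := by
    rw [hx4def]; linear_combination (norm := module) heq4
  have hx5D : x5 = (-e3)•v 7 + (-e4)•v 8 := by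
    rw [hx5def]; linear_combination (norm := module) heq5
  -- nonzeroness
  have hx1 : x1 ≠ 0 := by
    intro h0
    have h12 := P12 a1 a2 (by rw [← hx1def]; exact h0)
    have h56 := P56 (-a3) (-a4) (by rw [← hx1C]; exact h0)
    exact hne1 ⟨h12.1, h12.2, by simpa using h56.1, by simpa using h56.2⟩
  have hx2 : x2 ≠ 0 := by
    intro h0
    have h12 := P12 b1 b2 (by rw [← hx2def]; exact h0)
    have h910 := P910 (-b3) (-b4) (by rw [← hx2E]; exact h0)
    exact hne2 ⟨h12.1, h12.2, by simpa using h910.1, by simpa using h910.2⟩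
  have hx3 : x3 ≠ 0 := by
    intro h0
    have h56 := P56 c1 c2 (by rw [← hx3def]; exact h0)
    have h78 := P78 (-c3) (-c4) (by rw [← hx3D]; exact h0)
    exact hne3 ⟨h56.1, h56.2, by simpa using h78.1, by simpa using h78.2⟩
  have hx4 : x4 ≠ 0 := by
    intro h0
    have h78 := P78 d1 d2 (by rw [← hx4def]; exact h0)
    have h910 := P910 (-d3) (-d4) (by rw [← hx4E]; exact h0)
    exact hne4 ⟨h78.1, h78.2, by simpa using h910.1, by simpa using h910.2⟩
  have hx5 : x5 ≠ 0 := by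
    intro h0
    have h12 := P12 e1 e2 (by rw [← hx5def]; exact h0)
    have h78 := P78 (-e3) (-e4) (by rw [← hx5D]; exact h0)
    exact hne5 ⟨h12.1, h12.2, by simpa using h78.1, by simpa using h78.2⟩
  -- no C-vector is parallel to an E-vector
  have noCE : ∀ (p q r s t : F) (x y : W), x = p•v 5 + q•v 6 → y = r•v 9 + s•v 10 →
      x ≠ 0 → x = t•y → False := by
    intro p q r s t x y hx hy hxne hpar
    have h0 : p•v 5 + q•v 6 + (-(t*r))•v 9 + (-(t*s))•v 10 = 0 := by
      linear_combination (norm := module) hpar - hx + (t:F)•hy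
    obtain ⟨hp, hq, -, -⟩ := L3 _ _ _ _ h0
    exact hxne (by rw [hx, hp, hq, zero_smul, zero_smul, add_zero])
  -- x1, x2 independent; x3, x4 independent
  have hdet1 : a1*b2 - a2*b1 ≠ 0 := by
    intro hdet
    obtain ⟨t, -, hpar⟩ := para_of_det0 hx1def hx2def hdet hx1 hx2
    exact noCE _ _ _ _ t x1 x2 hx1C hx2E hx1 hpar
  have hdet2 : (-c3)*d2 - (-c4)*d1 ≠ 0 := by
    intro hdet
    obtain ⟨t, -, hpar⟩ := para_of_det0 hx3D hx4def hdet hx3 hx4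
    exact noCE _ _ _ _ t x3 x4 hx3def hx4E hx3 hpar
  -- expansions of v1, v2, v7, v8
  obtain ⟨⟨va1, va2, hv1⟩, ⟨vb1, vb2, hv2⟩⟩ := invpair hx1def hx2def hdet1
  obtain ⟨⟨r1, r2, hv7⟩, ⟨r3, r4, hv8⟩⟩ := invpair hx3D hx4def hdet2
  -- x5 in both bases
  obtain ⟨α, hαdef⟩ : ∃ t : F, t = e1*va1 + e2*vb1 := ⟨_, rfl⟩
  obtain ⟨β, hβdef⟩ : ∃ t : F, t = e1*va2 + e2*vb2 := ⟨_, rfl⟩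
  obtain ⟨γ, hγdef⟩ : ∃ t : F, t = (-e3)*r1 + (-e4)*r3 := ⟨_, rfl⟩
  obtain ⟨δ, hδdef⟩ : ∃ t : F, t = (-e3)*r2 + (-e4)*r4 := ⟨_, rfl⟩
  have hx5A : x5 = α•x1 + β•x2 := by
    rw [hx5def, hv1, hv2, hαdef, hβdef]; module
  have hx5B : x5 = γ•x3 + δ•x4 := by
    rw [hx5D, hv7, hv8, hγdef, hδdef]; module
  have hvec : α•x1 + β•x2 = γ•x3 + δ•x4 := by rw [← hx5A, ← hx5B]
  have hbig : (α*(-a3) - γ*c1)•v 5 + (α*(-a4) - γ*c2)•v 6 +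
      (β*(-b3) - δ*(-d3))•v 9 + (β*(-b4) - δ*(-d4))•v 10 = 0 := by
    linear_combination (norm := module) hvec - (α:F)•hx1C - (β:F)•hx2E +
      (γ:F)•hx3def + (δ:F)•hx4E
  obtain ⟨s5, s6, s9, s10⟩ := L3 _ _ _ _ hbig
  have hαγ : α•x1 = γ•x3 := by
    rw [hx1C, hx3def]
    match_scalars
    · linear_combination s5
    · linear_combination s6
  have hβδ : β•x2 = δ•x4 := by
    rw [hx2E, hx4E]
    match_scalars
    · linear_combination s9
    · linear_combination s10
  have hαβ : ¬(α = 0 ∧ β = 0) := fun ⟨h1, h2⟩ =>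
    hx5 (by rw [hx5A, h1, h2, zero_smul, zero_smul, add_zero])
  -- dichotomy
  have hP : (∃ μ : F, μ ≠ 0 ∧ x1 = μ•x3) ∨
      ((∃ ν : F, ν ≠ 0 ∧ x2 = ν•x4) ∧ (-a3)*c2 - (-a4)*c1 ≠ 0) := by
    have hcases : (∃ μ : F, μ ≠ 0 ∧ x1 = μ•x3) ∨ (∃ ν : F, ν ≠ 0 ∧ x2 = ν•x4) := by
      by_cases hα : α = 0
      · have hβ : β ≠ 0 := fun h => hαβ ⟨hα, h⟩
        have heq' : x2 = (β⁻¹*δ)•x4 := by rw [← inv_smul_smul₀ hβ x2, hβδ, smul_smul]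
        exact Or.inr ⟨β⁻¹*δ, fun h0 => hx2 (by rw [heq', h0, zero_smul]), heq'⟩
      · have heq' : x1 = (α⁻¹*γ)•x3 := by rw [← inv_smul_smul₀ hα x1, hαγ, smul_smul]
        exact Or.inl ⟨α⁻¹*γ, fun h0 => hx1 (by rw [heq', h0, zero_smul]), heq'⟩
    rcases hcases with h | h
    · exact Or.inl h
    · by_cases hdet4 : (-a3)*c2 - (-a4)*c1 = 0
      · exact Or.inl (para_of_det0 hx1C hx3def hdet4 hx1 hx3)
      · exact Or.inr ⟨h, hdet4⟩
  rcases hP with ⟨μ, hμ, hμeq⟩ | ⟨⟨ν, hν, hνeq⟩, hdet4⟩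
  · -- Case 1 : x1 parallel to x3
    by_cases hdet3 : (-b3)*(-d4) - (-b4)*(-d3) = 0
    · -- x2 also parallel to x4 : v1, v2 ∈ span {v7, v8}
      obtain ⟨t, -, hpar⟩ := para_of_det0 hx2E hx4E hdet3 hx2 hx4
      refine four_in_three (F := F) (y1 := v 7) (y2 := v 8) (y3 := v 9)
        ⟨va1*μ*(-c3) + va2*t*d1, va1*μ*(-c4) + va2*t*d2, 0, ?_⟩
        ⟨vb1*μ*(-c3) + vb2*t*d1, vb1*μ*(-c4) + vb2*t*d2, 0, ?_⟩
        ⟨1, 0, 0, by module⟩ ⟨0, 0, 1, by module⟩ L2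
      · rw [hv1, hμeq, hpar, hx3D, hx4def]; module
      · rw [hv2, hμeq, hpar, hx3D, hx4def]; module
    · -- v9 expands in x2, x4
      obtain ⟨⟨t1, t2, hv9⟩, -⟩ := invpair hx2E hx4E hdet3
      have hx3' : x3 = μ⁻¹•x1 := by
        rw [hμeq, smul_smul, inv_mul_cancel₀ hμ, one_smul]
      refine four_in_three (F := F) (y1 := x1) (y2 := x2) (y3 := x4)
        ⟨va1, va2, 0, by rw [hv1]; module⟩
        ⟨vb1, vb2, 0, by rw [hv2]; module⟩
        ⟨r1*μ⁻¹, 0, r2, ?_⟩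
        ⟨0, t1, t2, by rw [hv9]; module⟩ L2
      rw [hv7, hx3']; module
  · -- Case 2 : x2 parallel to x4, x1 and x3 independent
    obtain ⟨⟨u1, u2, hv5⟩, -⟩ := invpair hx1C hx3def hdet4
    refine four_in_three (F := F) (y1 := x1) (y2 := x3) (y3 := x4)
      ⟨va1, 0, va2*ν, by rw [hv1, hνeq]; module⟩
      ⟨vb1, 0, vb2*ν, by rw [hv2, hνeq]; module⟩
      ⟨u1, u2, 0, by rw [hv5]; module⟩
      ⟨0, r1, r2, by rw [hv7]; module⟩ L1
end

section
/- For all integers 1 ≤ r ≤ n, the elementary symmetric polynomial e_{r,n}(x) = Σ_{I ⊆ {1,…,n}, |I| = r} Π_{i∈I} x_i is stable. (Equivalently, the uniform matroid U_{r,n} has the half-plane property.) -/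
open Polynomial

/-- Logarithmic-derivative lemma: for a product of `X - a` over `a` with negative
imaginary part, evaluated at a point in the closed upper half plane. -/
lemma logderiv_aux (z : ℂ) (hz : 0 ≤ z.im) (m : Multiset ℂ) :
    (∀ a ∈ m, a.im < 0) →
      ((m.map fun a => X - C a).prod.eval z ≠ 0 ∧
       ((derivative (m.map fun a => X - C a).prod).eval z /
          ((m.map fun a => X - C a).prod.eval z)).im ≤ 0 ∧
       (m ≠ 0 → ((derivative (m.map fun a => X - C a).prod).eval z /
          ((m.map fun a => X - C a).prod.eval z)).im < 0)) := by
  induction m using Multiset.induction_on with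
  | empty => simp
  | cons a m ih =>
    intro hm
    have ham : a.im < 0 := hm a (Multiset.mem_cons_self a m)
    have hm' : ∀ b ∈ m, b.im < 0 := fun b hb => hm b (Multiset.mem_cons_of_mem hb)
    obtain ⟨hQ, hle, hlt⟩ := ih hm'
    have hza : (z - a) ≠ 0 := by
      intro h
      have : (z - a).im = 0 := by rw [h]; simp
      rw [Complex.sub_im] at this
      linarith
    have hzaim : 0 < (z - a).im := by rw [Complex.sub_im]; linarith
    have hinv : ((z - a)⁻¹).im < 0 := by
      rw [Complex.inv_im]
      apply div_neg_of_neg_of_pos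
      · linarith
      · exact Complex.normSq_pos.mpr hza
    set Q := (m.map fun b => X - C b).prod with hQdef
    have hprod : ((a ::ₘ m).map fun b => X - C b).prod = (X - C a) * Q := by
      rw [Multiset.map_cons, Multiset.prod_cons]
    have hderiv : derivative (((a ::ₘ m).map fun b => X - C b).prod)
        = Q + (X - C a) * derivative Q := by
      rw [hprod, derivative_mul]
      simp
    have hevalprod : (((a ::ₘ m).map fun b => X - C b).prod).eval z = (z - a) * Q.eval z := by
      rw [hprod]; simp
    have hne : (z - a) * Q.eval z ≠ 0 := mul_ne_zero hza hQ
    have hratio : (derivative (((a ::ₘ m).map fun b => X - C b).prod)).eval z /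
        ((((a ::ₘ m).map fun b => X - C b).prod).eval z)
        = (z - a)⁻¹ + (derivative Q).eval z / Q.eval z := by
      rw [hderiv, hevalprod]
      simp only [eval_add, eval_mul, eval_sub, eval_X, eval_C]
      field_simp
    refine ⟨by rw [hevalprod]; exact hne, ?_, ?_⟩
    · rw [hratio, Complex.add_im]; linarith
    · intro _
      rw [hratio, Complex.add_im]; linarith

/-- If all roots of `p` lie in the open lower half plane, the derivative of `p`
does not vanish on the closed upper half plane. -/
lemma deriv_eval_ne_zero {p : Polynomial ℂ} (hp : p ≠ 0) (hdeg : 1 ≤ p.natDegree)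
    (hroots : ∀ u : ℂ, p.eval u = 0 → u.im < 0) {z : ℂ} (hz : 0 ≤ z.im) :
    (derivative p).eval z ≠ 0 := by
  have hsplit : p.Splits := IsAlgClosed.splits p
  have hfact := hsplit.eq_prod_roots
  have hmem : ∀ a ∈ p.roots, a.im < 0 := by
    intro a ha
    exact hroots a ((mem_roots hp).1 ha)
  have hcard : p.roots ≠ 0 := by
    have h1 : p.natDegree = Multiset.card p.roots := by
      have := hsplit.natDegree_eq_card_roots
      exact this
    intro h
    rw [h] at h1
    simp at h1
    omega
  obtain ⟨hQ, _, hlt⟩ := logderiv_aux z hz p.roots hmem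
  set Q := (p.roots.map fun a => X - C a).prod with hQdef
  have hlc : p.leadingCoeff ≠ 0 := leadingCoeff_ne_zero.2 hp
  have hdQ : (derivative Q).eval z ≠ 0 := by
    intro h
    rw [h] at hlt
    simp at hlt
    exact hcard hlt
  rw [hfact, derivative_C_mul]
  simp only [eval_mul, eval_C]
  exact mul_ne_zero hlc hdQ

/-- Iterated version. -/
lemma iterate_deriv_eval_ne_zero (k : ℕ) : ∀ p : Polynomial ℂ, p ≠ 0 → k ≤ p.natDegree →
    (∀ u : ℂ, p.eval u = 0 → u.im < 0) → ∀ z : ℂ, 0 ≤ z.im →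
    (derivative^[k] p).eval z ≠ 0 := by
  induction k with
  | zero =>
    intro p hp _ hroots z hz h0
    exact absurd (hroots z h0) (not_lt.2 hz)
  | succ k ih =>
    intro p hp hk hroots z hz
    rw [Function.iterate_succ_apply]
    have hd1 : 1 ≤ p.natDegree := le_trans (Nat.one_le_iff_ne_zero.mpr (Nat.succ_ne_zero k)) hk
    have hdp_roots : ∀ u : ℂ, (derivative p).eval u = 0 → u.im < 0 := by
      intro u hu
      by_contra h
      exact deriv_eval_ne_zero hp hd1 hroots (not_lt.1 h) hu
    have hdpne : derivative p ≠ 0 := by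
      intro h
      apply deriv_eval_ne_zero hp hd1 hroots (z := Complex.I) (by simp)
      rw [h]; simp
    have hdeg : k ≤ (derivative p).natDegree := by
      have := degree_derivative_eq p (by omega)
      have h2 : (derivative p).natDegree = p.natDegree - 1 :=
        natDegree_eq_of_degree_eq_some this
      omega
    exact ih (derivative p) hdpne hdeg hdp_roots z hz

/-- Elementary symmetric function of numbers in the open upper half plane is nonzero. -/
lemma esymm_ne_zero (n r : ℕ) (hr : 1 ≤ r) (hrn : r ≤ n) (a : Fin n → ℂ)
    (ha : ∀ i, 0 < (a i).im) :
    ∑ I ∈ Finset.powersetCard r (Finset.univ : Finset (Fin n)), ∏ i ∈ I, a i ≠ 0 := by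
  set p : Polynomial ℂ := ∏ i : Fin n, (X + C (a i)) with hpdef
  have hcardu : (Finset.univ : Finset (Fin n)).card = n := by simp
  have hcoeff : p.coeff (n - r) =
      ∑ I ∈ Finset.powersetCard r (Finset.univ : Finset (Fin n)), ∏ i ∈ I, a i := by
    rw [hpdef, Finset.prod_X_add_C_coeff _ _ (by omega)]
    rw [hcardu, Nat.sub_sub_self hrn]
  have hmono : p.Monic := monic_prod_of_monic _ _ fun i _ => monic_X_add_C (a i)
  have hp0 : p ≠ 0 := hmono.ne_zero
  have hdeg : p.natDegree = n := by
    rw [hpdef, natDegree_prod _ _ (fun i _ => (monic_X_add_C (a i)).ne_zero)]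
    simp [natDegree_X_add_C]
  have hroots : ∀ u : ℂ, p.eval u = 0 → u.im < 0 := by
    intro u hu
    rw [hpdef, eval_prod] at hu
    obtain ⟨i, _, hi⟩ := Finset.prod_eq_zero_iff.mp hu
    simp only [eval_add, eval_X, eval_C] at hi
    have : u = -a i := by linear_combination hi
    rw [this]
    simp only [Complex.neg_im]
    linarith [ha i]
  have key := iterate_deriv_eval_ne_zero (n - r) p hp0 (by omega) hroots 0 (by simp)
  rw [← coeff_zero_eq_eval_zero, coeff_iterate_derivative] at key
  simp only [zero_add, Nat.descFactorial_self, smul_eq_mul] at key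
  intro h
  apply key
  rw [← hcoeff] at h
  rw [h, smul_zero]

open MvPolynomial

/-- Stability of a (homogeneous) real polynomial in `n` variables: for every
`v ∈ (ℝ_{>0})ⁿ` and `w ∈ ℝⁿ`, every complex root of the univariate real polynomial
`t ↦ f (t • v + w)` is real. -/
def IsStable {n : ℕ} (f : MvPolynomial (Fin n) ℝ) : Prop :=
  ∀ v w : Fin n → ℝ, (∀ i, 0 < v i) →
    ∀ z : ℂ,
      (Polynomial.aeval z)
        ((MvPolynomial.aeval fun i =>
          Polynomial.C (w i) + Polynomial.C (v i) * Polynomial.X) f) = 0 →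
      z.im = 0

/-- For all `1 ≤ r ≤ n`, the elementary symmetric polynomial
`e_{r,n} = Σ_{|I| = r} Π_{i ∈ I} xᵢ` is stable; equivalently, the uniform matroid
`U_{r,n}` has the half-plane property. -/
theorem esymm_isStable (n r : ℕ) (hr : 1 ≤ r) (hrn : r ≤ n) :
    IsStable (∑ I ∈ Finset.powersetCard r (Finset.univ : Finset (Fin n)),
      ∏ i ∈ I, (MvPolynomial.X i : MvPolynomial (Fin n) ℝ)) := by
  intro v w hv z hz
  have hz' : ∑ I ∈ Finset.powersetCard r (Finset.univ : Finset (Fin n)),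
      ∏ i ∈ I, ((w i : ℂ) + (v i : ℂ) * z) = 0 := by
    simpa [map_sum, map_prod] using hz
  by_contra him
  rcases lt_or_gt_of_ne him with hlt | hgt
  · -- z.im < 0 : use conjugates
    apply esymm_ne_zero n r hr hrn (fun i => (starRingEnd ℂ) ((w i : ℂ) + (v i : ℂ) * z))
      (fun i => by
        simp only [Complex.conj_im, map_add, map_mul, Complex.conj_ofReal,
          Complex.add_im, Complex.ofReal_im, Complex.mul_im, Complex.ofReal_re]
        nlinarith [hv i, Complex.conj_im z])
    have hc := congrArg (starRingEnd ℂ) hz'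
    rw [map_sum] at hc
    simp only [map_prod] at hc
    simpa using hc
  · apply esymm_ne_zero n r hr hrn (fun i => (w i : ℂ) + (v i : ℂ) * z)
      (fun i => by
        simp only [Complex.add_im, Complex.ofReal_im, Complex.mul_im, Complex.ofReal_re,
          Complex.ofReal_im, zero_add, zero_mul, add_zero]
        nlinarith [hv i, hgt])
    exact hz'
end
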